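/- Let A be a filtered P₀-algebra as in the shifted cotangent bundle setting (FᵖA the ideal generated by degree ≥ p elements, I = F¹A). Then [I⁽²⁾ ∩ A⁰, FᵖA] ⊆ F^{p+1}A for all p ≥ 0; i.e., degree-zero elements of the square of the augmentation ideal act trivially on the associated graded gr A = ⊕ₚ FᵖA/F^{p+1}A. -/

import Mathlib

/-- A `P₀`-algebra over a field `k`: a ℤ-graded (graded-commutative) algebra with a
Poisson bracket of degree `1` satisfying graded antisymmetry, Leibniz rule and
graded Jacobi identity. -/
structure P0Data (k A : Type*) [Field k] [Ring A] [Algebra k A] where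
  grade : ℤ → Submodule k A
  internal : DirectSum.IsInternal grade
  one_mem : (1 : A) ∈ grade 0
  mul_mem : ∀ {r s : ℤ} {a b : A}, a ∈ grade r → b ∈ grade s → a * b ∈ grade (r + s)
  gcomm : ∀ {r s : ℤ} {a b : A}, a ∈ grade r → b ∈ grade s →
    a * b = ((-1 : k) ^ (r * s)) • (b * a)
  bracket : A →ₗ[k] A →ₗ[k] A
  bracket_mem : ∀ {r s : ℤ} {a b : A}, a ∈ grade r → b ∈ grade s →
    bracket a b ∈ grade (r + s + 1)
  antisymm : ∀ {r s : ℤ} {a b : A}, a ∈ grade r → b ∈ grade s →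
    bracket a b = -(((-1 : k) ^ ((r - 1) * (s - 1))) • bracket b a)
  leibniz : ∀ {r s : ℤ} {a b : A} (c : A), a ∈ grade r → b ∈ grade s →
    bracket (a * b) c = a * bracket b c + ((-1 : k) ^ (r * s)) • (b * bracket a c)
  jacobi : ∀ {r s t : ℤ} {a b c : A}, a ∈ grade r → b ∈ grade s → c ∈ grade t →
    ((-1 : k) ^ ((r - 1) * (t - 1))) • bracket (bracket a b) c +
      ((-1 : k) ^ ((s - 1) * (r - 1))) • bracket (bracket b c) a +
      ((-1 : k) ^ ((t - 1) * (s - 1))) • bracket (bracket c a) b = 0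

/-- The ideal `FᵖA` generated by homogeneous elements of degree at least `p`. -/
def P0Data.filt {k A : Type*} [Field k] [Ring A] [Algebra k A] (P : P0Data k A) (p : ℤ) :
    Submodule k A :=
  Submodule.span k {x | ∃ (a b : A) (q : ℤ), p ≤ q ∧ b ∈ P.grade q ∧ x = a * b}

/-- The powers `I⁽ʲ⁾` of the ideal `I = F¹A` generated by elements of positive degree:
`I⁽⁰⁾ = A`, `I⁽ʲ⁺¹⁾ = I · I⁽ʲ⁾`. -/
def P0Data.ipow {k A : Type*} [Field k] [Ring A] [Algebra k A] (P : P0Data k A) :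
    ℕ → Submodule k A
  | 0 => ⊤
  | j + 1 => Submodule.span k {x | ∃ a ∈ P.filt 1, ∃ b ∈ P.ipow j, x = a * b}

section Aux

variable {k A : Type*} [Field k] [Ring A] [Algebra k A] (P : P0Data k A)

lemma P0Aux.filt_mono {p p' : ℤ} (h : p' ≤ p) : P.filt p ≤ P.filt p' :=
  Submodule.span_mono (by rintro x ⟨a, b, q, hq, hb, rfl⟩; exact ⟨a, b, q, h.trans hq, hb, rfl⟩)

lemma P0Aux.grade_le_filt {q p : ℤ} {a : A} (ha : a ∈ P.grade q) (h : p ≤ q) :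
    a ∈ P.filt p :=
  Submodule.subset_span ⟨1, a, q, h, ha, (one_mul a).symm⟩

lemma P0Aux.mul_filt {p : ℤ} (c : A) {x : A} (hx : x ∈ P.filt p) : c * x ∈ P.filt p := by
  induction hx using Submodule.span_induction with
  | mem x h =>
    obtain ⟨a, b, q, hq, hb, rfl⟩ := h
    exact Submodule.subset_span ⟨c * a, b, q, hq, hb, (mul_assoc c a b).symm⟩
  | zero => simpa using (P.filt p).zero_mem
  | add x y _ _ hx hy => simpa [mul_add] using (P.filt p).add_mem hx hy
  | smul t x _ hx => simpa [mul_smul_comm] using (P.filt p).smul_mem t hx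

lemma P0Aux.homog_top (a : A) : a ∈ ⨆ i, P.grade i := by
  rw [P.internal.submodule_iSup_eq_top]; trivial

lemma P0Aux.filt_mul_right {p : ℤ} {x : A} (hx : x ∈ P.filt p) (c : A) :
    x * c ∈ P.filt p := by
  induction hx using Submodule.span_induction generalizing c with
  | mem x h =>
    obtain ⟨a, b, q, hq, hb, rfl⟩ := h
    refine Submodule.iSup_induction (motive := fun c => a * b * c ∈ P.filt p) P.grade
      (P0Aux.homog_top P c) (fun t c hc => ?_) (by simpa using (P.filt p).zero_mem)
      (fun c d hc hd => by simpa [mul_add] using (P.filt p).add_mem hc hd)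
    show a * b * c ∈ P.filt p
    have hcomm : b * c = ((-1 : k) ^ (q * t)) • (c * b) := P.gcomm hb hc
    have : a * b * c = ((-1 : k) ^ (q * t)) • (a * c * b) := by
      rw [mul_assoc, hcomm, mul_smul_comm, mul_assoc]
    rw [this]
    exact (P.filt p).smul_mem _ (Submodule.subset_span ⟨a * c, b, q, hq, hb, rfl⟩)
  | zero => simpa using (P.filt p).zero_mem
  | add x y _ _ hx hy => simpa [add_mul] using (P.filt p).add_mem (hx c) (hy c)
  | smul t x _ hx => simpa [smul_mul_assoc] using (P.filt p).smul_mem t (hx c)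

lemma P0Aux.filt_mul {m n : ℤ} {x y : A} (hx : x ∈ P.filt m) (hy : y ∈ P.filt n) :
    x * y ∈ P.filt (m + n) := by
  induction hy using Submodule.span_induction generalizing x with
  | mem y h =>
    obtain ⟨a', b', q', hq', hb', rfl⟩ := h
    induction hx using Submodule.span_induction with
    | mem x h =>
      obtain ⟨a, b, q, hq, hb, rfl⟩ := h
      refine Submodule.iSup_induction (motive := fun a' => a * b * (a' * b') ∈ P.filt (m + n))
        P.grade (P0Aux.homog_top P a') (fun t c hc => ?_)
        (by simpa using (P.filt (m + n)).zero_mem)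
        (fun c d hc hd => by simpa [mul_add, add_mul] using (P.filt (m + n)).add_mem hc hd)
      show a * b * (c * b') ∈ P.filt (m + n)
      have hcomm : b * c = ((-1 : k) ^ (q * t)) • (c * b) := P.gcomm hb hc
      have : a * b * (c * b') = ((-1 : k) ^ (q * t)) • (a * c * (b * b')) := by
        rw [mul_assoc a b, ← mul_assoc b c, hcomm, smul_mul_assoc, mul_smul_comm,
          mul_assoc c b b', ← mul_assoc a c]
      rw [this]
      exact (P.filt (m + n)).smul_mem _ (Submodule.subset_span
        ⟨a * c, b * b', q + q', add_le_add hq hq', P.mul_mem hb hb', rfl⟩)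
    | zero => simpa using (P.filt (m + n)).zero_mem
    | add x y _ _ hx hy => simpa [add_mul] using (P.filt (m + n)).add_mem hx hy
    | smul t x _ hx => simpa [smul_mul_assoc] using (P.filt (m + n)).smul_mem t hx
  | zero => simpa using (P.filt (m + n)).zero_mem
  | add y z _ _ hy hz => simpa [mul_add] using (P.filt (m + n)).add_mem (hy hx) (hz hx)
  | smul t y _ hy => simpa [mul_smul_comm] using (P.filt (m + n)).smul_mem t (hy hx)

lemma P0Aux.filt_span_homog (p : ℤ) :
    P.filt p ≤ Submodule.span k {y : A | (∃ d, y ∈ P.grade d) ∧ y ∈ P.filt p} := by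
  rw [P0Data.filt, Submodule.span_le]
  rintro x ⟨a, b, q, hq, hb, rfl⟩
  refine Submodule.iSup_induction
    (motive := fun a => a * b ∈ Submodule.span k {y : A | (∃ d, y ∈ P.grade d) ∧ y ∈ P.filt p})
    P.grade (P0Aux.homog_top P a) (fun t c hc => ?_)
    (by simpa using Submodule.zero_mem _)
    (fun c d hc hd => by simpa [add_mul] using Submodule.add_mem _ hc hd)
  show c * b ∈ _
  exact Submodule.subset_span ⟨⟨t + q, P.mul_mem hc hb⟩,
    Submodule.subset_span ⟨c, b, q, hq, hb, rfl⟩⟩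

lemma P0Aux.bracket_low {s p : ℤ} (hs : s ≤ -1) {f : A} (hf : f ∈ P.grade s)
    {x : A} (hx : x ∈ P.filt p) : P.bracket f x ∈ P.filt (p + s + 1) := by
  induction hx using Submodule.span_induction with
  | mem x h =>
    obtain ⟨a, b, q, hq, hb, rfl⟩ := h
    refine Submodule.iSup_induction
      (motive := fun a => P.bracket f (a * b) ∈ P.filt (p + s + 1)) P.grade
      (P0Aux.homog_top P a) (fun t c hc => ?_)
      (by simpa using Submodule.zero_mem _)
      (fun c d hc hd => by simpa [add_mul] using Submodule.add_mem _ hc hd)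
    · show P.bracket f (c * b) ∈ P.filt (p + s + 1)
      have hcb : c * b ∈ P.grade (t + q) := P.mul_mem hc hb
      rw [P.antisymm hf hcb, P.leibniz f hc hb]
      have h1 : c * P.bracket b f ∈ P.filt (p + s + 1) := by
        refine P0Aux.mul_filt P c (P0Aux.filt_mono P ?_ (P0Aux.grade_le_filt P
          (P.bracket_mem hb hf) le_rfl))
        omega
      have h2 : b * P.bracket c f ∈ P.filt (p + s + 1) := by
        have hw : P.bracket c f ∈ P.grade (t + s + 1) := P.bracket_mem hc hf
        rw [P.gcomm hb hw]
        refine Submodule.smul_mem _ _ (Submodule.subset_span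
          ⟨P.bracket c f, b, q, by omega, hb, rfl⟩)
      exact Submodule.neg_mem _ (Submodule.smul_mem _ _
        (Submodule.add_mem _ h1 (Submodule.smul_mem _ _ h2)))
  | zero => simpa using Submodule.zero_mem _
  | add x y _ _ hx hy => simpa using Submodule.add_mem _ hx hy
  | smul t x _ hx => simpa using Submodule.smul_mem _ t hx

lemma P0Aux.core {p r : ℤ} (hp : 0 ≤ p) (hr : 0 ≤ r)
    (hMaud : ∀ (d p : ℤ), -1 ≤ d → 0 ≤ p → ∀ a ∈ P.grade d, ∀ x ∈ P.filt p,
      P.bracket a x ∈ P.filt p)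
    {e f x : A} (he : e ∈ P.grade r) (he1 : e ∈ P.filt 1)
    (hf : f ∈ P.grade (-r)) (hf1 : f ∈ P.filt 1) (hx : x ∈ P.filt p) :
    P.bracket (e * f) x ∈ P.filt (p + 1) := by
  rw [P.leibniz x he hf]
  have h2 : f * P.bracket e x ∈ P.filt (p + 1) := by
    have := P0Aux.filt_mul P hf1 (hMaud r p (by omega) hp e he x hx)
    rwa [add_comm] at this
  have h1 : e * P.bracket f x ∈ P.filt (p + 1) := by
    rcases le_or_gt r 1 with h | h
    · have := P0Aux.filt_mul P he1 (hMaud (-r) p (by omega) hp f hf x hx)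
      rwa [add_comm] at this
    · have hb := P0Aux.bracket_low P (s := -r) (by omega) hf hx
      have := P0Aux.filt_mul P (P0Aux.grade_le_filt P he le_rfl) hb
      have harith : r + (p + -r + 1) = p + 1 := by ring
      rwa [harith] at this
  exact Submodule.add_mem _ h1 (Submodule.smul_mem _ _ h2)


lemma P0Aux.mul_mem_spanT {a b : A} (ha : a ∈ P.filt 1) (hb : b ∈ P.filt 1) :
    a * b ∈ Submodule.span k {y : A | ∃ (r s : ℤ) (e f : A), e ∈ P.grade r ∧ e ∈ P.filt 1 ∧
      f ∈ P.grade s ∧ f ∈ P.filt 1 ∧ y = e * f} := by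
  have ha' := P0Aux.filt_span_homog P 1 ha
  have hb' := P0Aux.filt_span_homog P 1 hb
  clear ha hb
  induction ha' using Submodule.span_induction with
  | mem e he =>
    obtain ⟨⟨r, her⟩, he1⟩ := he
    induction hb' using Submodule.span_induction with
    | mem f hf =>
      obtain ⟨⟨s, hfs⟩, hf1⟩ := hf
      exact Submodule.subset_span ⟨r, s, e, f, her, he1, hfs, hf1, rfl⟩
    | zero => simpa using Submodule.zero_mem _
    | add u v _ _ hu hv => simpa [mul_add] using Submodule.add_mem _ hu hv
    | smul t u _ hu => simpa [mul_smul_comm] using Submodule.smul_mem _ t hu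
  | zero => simpa using Submodule.zero_mem _
  | add u v _ _ hu hv => simpa [add_mul] using Submodule.add_mem _ hu hv
  | smul t u _ hu => simpa [smul_mul_assoc] using Submodule.smul_mem _ t hu

end Aux

/-- Lemma l-Fitzherbert. `[I⁽²⁾ ∩ A⁰, FᵖA] ⊆ F^{p+1}A` for all `p ≥ 0`:
degree-zero elements of the square of the augmentation ideal act trivially on the
associated graded of the filtration. -/
theorem bracket_isq_deg0_raises_filtration {k A : Type*} [Field k] [CharZero k]
    [Ring A] [Algebra k A] (P : P0Data k A)
    (hMaud : ∀ (d p : ℤ), -1 ≤ d → 0 ≤ p → ∀ a ∈ P.grade d, ∀ x ∈ P.filt p,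
      P.bracket a x ∈ P.filt p) :
    ∀ p : ℤ, 0 ≤ p → ∀ a : A, a ∈ P.ipow 2 → a ∈ P.grade 0 →
      ∀ x ∈ P.filt p, P.bracket a x ∈ P.filt (p + 1) := by
  intro p hp a ha2 ha0 x hx
  set T : Set A := {y : A | ∃ (r s : ℤ) (e f : A), e ∈ P.grade r ∧ e ∈ P.filt 1 ∧
      f ∈ P.grade s ∧ f ∈ P.filt 1 ∧ y = e * f} with hTdef
  have hI1 : P.ipow 1 ≤ P.filt 1 := by
    rw [show P.ipow 1 = Submodule.span k
      {x | ∃ a ∈ P.filt 1, ∃ b ∈ P.ipow 0, x = a * b} from rfl, Submodule.span_le]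
    rintro y ⟨c, hc, d, _, rfl⟩
    exact P0Aux.filt_mul_right P hc d
  have hT : a ∈ Submodule.span k T := by
    refine (?_ : P.ipow 2 ≤ Submodule.span k T) ha2
    rw [show P.ipow 2 = Submodule.span k
      {x | ∃ a ∈ P.filt 1, ∃ b ∈ P.ipow 1, x = a * b} from rfl, Submodule.span_le]
    rintro y ⟨c, hc, d, hd, rfl⟩
    exact P0Aux.mul_mem_spanT P hc (hI1 hd)
  -- the degree-zero projection
  set E := LinearEquiv.ofBijective (DirectSum.coeLinearMap P.grade) P.internal with hEdef
  set π : A →ₗ[k] A := (P.grade 0).subtype ∘ₗ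
    (DirectSum.component k ℤ (fun i => (P.grade i : Submodule k A)) 0) ∘ₗ
    E.symm.toLinearMap with hπdef
  have hπ_same : ∀ w ∈ P.grade 0, π w = w := by
    intro w hw
    have h := P.internal.ofBijective_coeLinearMap_of_mem (i := 0) hw
    simp only [hπdef, LinearMap.comp_apply, LinearEquiv.coe_coe, Submodule.subtype_apply]
    rw [← DirectSum.apply_eq_component, ← hEdef] at *
    rw [h]
  have hπ_ne : ∀ (d : ℤ), d ≠ 0 → ∀ w ∈ P.grade d, π w = 0 := by
    intro d hd w hw
    have h := P.internal.ofBijective_coeLinearMap_of_mem_ne (i := d) (j := 0) hd hw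
    simp only [hπdef, LinearMap.comp_apply, LinearEquiv.coe_coe, Submodule.subtype_apply]
    rw [← DirectSum.apply_eq_component, ← hEdef] at *
    rw [h]; rfl
  set T₀ : Set A := {y : A | ∃ (r : ℤ) (e f : A), e ∈ P.grade r ∧ e ∈ P.filt 1 ∧
      f ∈ P.grade (-r) ∧ f ∈ P.filt 1 ∧ y = e * f} with hT₀def
  have hmem0 : a ∈ Submodule.span k T₀ := by
    have h1 : π a ∈ Submodule.map π (Submodule.span k T) := ⟨a, hT, rfl⟩
    rw [Submodule.map_span] at h1
    have hsub : π '' T ⊆ (Submodule.span k T₀ : Set A) := by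
      rintro _ ⟨y, ⟨r, s, e, f, her, he1, hfs, hf1, rfl⟩, rfl⟩
      by_cases h : r + s = 0
      · have hgr : e * f ∈ P.grade 0 := by
          have := P.mul_mem her hfs; rwa [h] at this
        rw [hπ_same _ hgr]
        refine Submodule.subset_span ⟨r, e, f, her, he1, ?_, hf1, rfl⟩
        rwa [show -r = s by omega]
      · rw [hπ_ne (r + s) h _ (P.mul_mem her hfs)]
        exact Submodule.zero_mem _
    have h2 := Submodule.span_le.mpr hsub h1
    rwa [hπ_same a ha0] at h2
  clear hT ha2 ha0
  induction hmem0 using Submodule.span_induction with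
  | mem u hu =>
    obtain ⟨r, e, f, her, he1, hfr, hf1, rfl⟩ := hu
    rcases le_or_gt 0 r with h | h
    · exact P0Aux.core P hp h hMaud her he1 hfr hf1 hx
    · have hswap : e * f = ((-1 : k) ^ (r * (-r))) • (f * e) := P.gcomm her hfr
      rw [hswap, map_smul, LinearMap.smul_apply]
      refine Submodule.smul_mem _ _ ?_
      exact P0Aux.core P hp (by omega) hMaud hfr hf1 (by rwa [neg_neg]) he1 hx
  | zero => simpa using Submodule.zero_mem _
  | add u v _ _ hu hv =>
    rw [map_add, LinearMap.add_apply]; exact Submodule.add_mem _ hu hv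
  | smul t u _ hu =>
    rw [map_smul, LinearMap.smul_apply]; exact Submodule.smul_mem _ t hu
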